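/- Let B be an operator on a Hilbert space V over 𝕂 = ℝ or ℂ. Then both B and −B are m-dissipative if and only if D(B) is dense in V and B* = −B, where B* is the adjoint of B. (Equivalently, by the Lumer–Phillips theorem, these conditions characterize generators of unitary C₀-groups.) -/
import Mathlib


variable {𝕜 V : Type*} [RCLike 𝕜] [NormedAddCommGroup V] [InnerProductSpace 𝕜 V]
  [CompleteSpace V]

section Aux

open RCLike

local notation "⟪" x ", " y "⟫" => @inner 𝕜 _ _ x y

private lemma re_I_mul (a : 𝕜) : re ((I : 𝕜) * a) = -im a := by
  rw [mul_re, I_re, zero_mul, I_im', zero_sub]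

variable (B : V →ₗ.[𝕜] V)

/-- From `re ⟪Bx, x⟫ = 0` on the domain, deduce skew-symmetry of the form. -/
private lemma skew_of_re_zero (h : ∀ x : B.domain, re ⟪B x, (x : V)⟫ = 0) :
    ∀ u x : B.domain, ⟪B u, (x : V)⟫ = ⟪(u : V), -(B x)⟫ := by
  intro u x
  set a := ⟪B u, (x : V)⟫ with ha
  set b := ⟪B x, (u : V)⟫ with hb
  have hu := h u
  have hx := h x
  have h1 : re a + re b = 0 := by
    have hs := h (u + x)
    have hc : ((u + x : B.domain) : V) = (u : V) + (x : V) := rfl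
    rw [B.map_add, hc, inner_add_left, inner_add_right, inner_add_right, map_add, map_add,
      map_add, ← ha, ← hb] at hs
    linarith
  have h2 : -im a + im b = 0 := by
    have hs := h (u + (I : 𝕜) • x)
    have hc : ((u + (I : 𝕜) • x : B.domain) : V) = (u : V) + (I : 𝕜) • (x : V) := rfl
    have hBval : B (u + (I : 𝕜) • x) = B u + (I : 𝕜) • B x := by
      rw [B.map_add, B.map_smul]
    have hinner : ⟪B u + (I : 𝕜) • (B x), (u : V) + (I : 𝕜) • (x : V)⟫
        = ⟪B u, (u : V)⟫ + (I : 𝕜) * a + (-(I : 𝕜)) * b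
          + (-(I : 𝕜)) * ((I : 𝕜) * ⟪B x, (x : V)⟫) := by
      simp only [inner_add_left, inner_add_right, inner_smul_left, inner_smul_right, conj_I,
        ← ha, ← hb]
      ring
    rw [hBval, hc, hinner, map_add, map_add, map_add] at hs
    have e1 : re ((I : 𝕜) * a) = -im a := re_I_mul a
    have e2 : re ((-(I : 𝕜)) * b) = im b := by
      rw [neg_mul, map_neg, re_I_mul, neg_neg]
    have e3 : re ((-(I : 𝕜)) * ((I : 𝕜) * ⟪B x, (x : V)⟫)) = 0 := by
      rw [neg_mul, map_neg, re_I_mul, mul_im, I_re, zero_mul, hx, mul_zero, add_zero]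
      simp
    rw [e1, e2, e3] at hs
    linarith
  have goal : a = -(starRingEnd 𝕜) b := by
    apply RCLike.ext
    · simp only [map_neg, conj_re]
      linarith
    · simp only [map_neg, conj_im, neg_neg]
      linarith
  rw [inner_neg_right, ← inner_conj_symm, ← hb]
  exact goal

private lemma re_zero_of_skew
    (hskew : ∀ u x : B.domain, ⟪B u, (x : V)⟫ = ⟪(u : V), -(B x)⟫) :
    ∀ x : B.domain, re ⟪B x, (x : V)⟫ = 0 := by
  intro x
  have := hskew x x
  rw [inner_neg_right, ← inner_conj_symm ((x : V)) (B x)] at this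
  have h2 := congrArg re this
  rw [map_neg, conj_re] at h2
  linarith

private lemma norm_le_of_skew
    (hskew : ∀ u x : B.domain, ⟪B u, (x : V)⟫ = ⟪(u : V), -(B x)⟫) (u : B.domain) :
    ‖(u : V)‖ ≤ ‖(u : V) - B u‖ ∧ ‖B u‖ ≤ ‖(u : V) - B u‖ := by
  have hre : re ⟪(u : V), B u⟫ = 0 := by
    have h0 := re_zero_of_skew B hskew u
    rw [← inner_conj_symm ((u : V)) (B u), conj_re]
    exact h0
  have hsq : ‖(u : V) - B u‖ ^ 2 = ‖(u : V)‖ ^ 2 + ‖B u‖ ^ 2 := by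
    rw [@norm_sub_sq 𝕜, hre]
    ring
  constructor
  · have h1 : ‖(u : V)‖ ^ 2 ≤ ‖(u : V) - B u‖ ^ 2 := by
      rw [hsq]; nlinarith [sq_nonneg ‖B u‖, sq_nonneg ‖(u : V)‖]
    calc ‖(u : V)‖ = Real.sqrt (‖(u : V)‖ ^ 2) := (Real.sqrt_sq (norm_nonneg _)).symm
      _ ≤ Real.sqrt (‖(u : V) - B u‖ ^ 2) := Real.sqrt_le_sqrt h1
      _ = ‖(u : V) - B u‖ := Real.sqrt_sq (norm_nonneg _)
  · have h1 : ‖B u‖ ^ 2 ≤ ‖(u : V) - B u‖ ^ 2 := by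
      rw [hsq]; nlinarith [sq_nonneg ‖B u‖, sq_nonneg ‖(u : V)‖]
    calc ‖B u‖ = Real.sqrt (‖B u‖ ^ 2) := (Real.sqrt_sq (norm_nonneg _)).symm
      _ ≤ Real.sqrt (‖(u : V) - B u‖ ^ 2) := Real.sqrt_le_sqrt h1
      _ = ‖(u : V) - B u‖ := Real.sqrt_sq (norm_nonneg _)

private lemma cauchySeq_of_dist_le {a g : ℕ → V} (hg : CauchySeq g)
    (h : ∀ n m, dist (a n) (a m) ≤ dist (g n) (g m)) : CauchySeq a := by
  rw [Metric.cauchySeq_iff] at hg ⊢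
  intro ε hε
  obtain ⟨N, hN⟩ := hg ε hε
  exact ⟨N, fun n hn m hm => lt_of_le_of_lt (h n m) (hN n hn m hm)⟩

private lemma surj_of_skew (hd : Dense (B.domain : Set V))
    (hskew : ∀ u x : B.domain, ⟪B u, (x : V)⟫ = ⟪(u : V), -(B x)⟫)
    (hadj : ∀ v f : V, (∀ u : B.domain, ⟪f, (u : V)⟫ = ⟪v, B u⟫) →
      ∃ x : B.domain, (x : V) = v ∧ B x = -f) :
    ∀ y : V, ∃ x : B.domain, (x : V) - B x = y := by
  classical
  set M : Submodule 𝕜 V := LinearMap.range (B.domain.subtype - B.toFun) with hM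
  have hmem : ∀ y : V, y ∈ M ↔ ∃ x : B.domain, (x : V) - B x = y := by
    intro y
    constructor
    · rintro ⟨x, rfl⟩
      exact ⟨x, rfl⟩
    · rintro ⟨x, rfl⟩
      exact ⟨x, rfl⟩
  -- M is closed
  have hclosed : IsClosed (M : Set V) := by
    refine isClosed_of_closure_subset ?_
    intro w hw
    obtain ⟨g, hgM, hgw⟩ := mem_closure_iff_seq_limit.mp hw
    choose xs hxs using fun n => (hmem (g n)).mp (hgM n)
    have hgc : CauchySeq g := hgw.cauchySeq
    have key : ∀ n m : ℕ, dist ((xs n : V)) ((xs m : V)) ≤ dist (g n) (g m) ∧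
        dist (B (xs n)) (B (xs m)) ≤ dist (g n) (g m) := by
      intro n m
      have h1 := norm_le_of_skew B hskew (xs n - xs m)
      have e1 : ((xs n - xs m : B.domain) : V) = (xs n : V) - (xs m : V) := rfl
      have e2 : B (xs n - xs m) = B (xs n) - B (xs m) := B.map_sub _ _
      have e3 : ((xs n : V) - (xs m : V)) - (B (xs n) - B (xs m)) = g n - g m := by
        rw [← hxs n, ← hxs m]
        abel
      rw [e1, e2, e3] at h1
      simp only [dist_eq_norm]
      exact h1
    obtain ⟨p, hp⟩ := cauchySeq_tendsto_of_complete
      (cauchySeq_of_dist_le (a := fun n => (xs n : V)) hgc fun n m => (key n m).1)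
    obtain ⟨q, hq⟩ := cauchySeq_tendsto_of_complete
      (cauchySeq_of_dist_le (a := fun n => B (xs n)) hgc fun n m => (key n m).2)
    have hw' : w = p - q := by
      refine tendsto_nhds_unique hgw ?_
      have := hp.sub hq
      refine this.congr fun n => ?_
      exact hxs n
    have hpre : ∀ u : B.domain, ⟪-q, (u : V)⟫ = ⟪p, B u⟫ := by
      intro u
      have hn : ∀ n : ℕ, ⟪(xs n : V), B u⟫ = ⟪-(B (xs n)), (u : V)⟫ := by
        intro n
        have hsk := hskew u (xs n)
        calc ⟪(xs n : V), B u⟫ = (starRingEnd 𝕜) ⟪B u, (xs n : V)⟫ := (inner_conj_symm _ _).symm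
          _ = (starRingEnd 𝕜) ⟪(u : V), -(B (xs n))⟫ := by rw [hsk]
          _ = ⟪-(B (xs n)), (u : V)⟫ := inner_conj_symm _ _
      have t1 : Filter.Tendsto (fun n => ⟪(xs n : V), B u⟫) Filter.atTop (nhds ⟪p, B u⟫) :=
        hp.inner tendsto_const_nhds
      have t2 : Filter.Tendsto (fun n => ⟪-(B (xs n)), (u : V)⟫) Filter.atTop
          (nhds ⟪-q, (u : V)⟫) := hq.neg.inner tendsto_const_nhds
      exact (tendsto_nhds_unique (t1.congr fun n => hn n) t2).symm
    obtain ⟨x, hx1, hx2⟩ := hadj p (-q) hpre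
    refine (hmem w).mpr ⟨x, ?_⟩
    rw [hx1, hx2, neg_neg, hw']
  -- M is dense
  have htop : M.topologicalClosure = ⊤ := by
    have hbot : Mᗮ = ⊥ := by
      rw [Submodule.eq_bot_iff]
      intro y hy
      have hy' : ∀ u : B.domain, ⟪(u : V) - B u, y⟫ = 0 := fun u =>
        hy _ ((hmem _).mpr ⟨u, rfl⟩)
      have hyB : ∀ u : B.domain, ⟪y, (u : V)⟫ = ⟪y, B u⟫ := by
        intro u
        have h0 := hy' u
        rw [inner_sub_left, sub_eq_zero] at h0
        calc ⟪y, (u : V)⟫ = (starRingEnd 𝕜) ⟪(u : V), y⟫ := (inner_conj_symm _ _).symm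
          _ = (starRingEnd 𝕜) ⟪B u, y⟫ := by rw [h0]
          _ = ⟪y, B u⟫ := inner_conj_symm _ _
      obtain ⟨x, hx1, hx2⟩ := hadj y y hyB
      have h0 := re_zero_of_skew B hskew x
      rw [hx2, hx1, inner_neg_left, map_neg] at h0
      have hy0 : re ⟪y, y⟫ = 0 := by linarith
      rw [inner_self_eq_norm_sq (𝕜 := 𝕜)] at hy0
      exact norm_eq_zero.mp ((pow_eq_zero_iff two_ne_zero).mp hy0)
    rw [← M.orthogonal_orthogonal_eq_closure, hbot, Submodule.bot_orthogonal_eq_top]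
  intro y
  have hyM : y ∈ M := by
    have h1 : y ∈ M.topologicalClosure := by rw [htop]; trivial
    have h2 : y ∈ closure (M : Set V) := h1
    rwa [hclosed.closure_eq] at h2
  exact (hmem y).mp hyM

/-- An operator `A` on `V` is *dissipative* if `Re ⟪Ax, x⟫ ≤ 0` for all `x ∈ D(A)`. -/
def Dissipative (A : V →ₗ.[𝕜] V) : Prop :=
  ∀ x : A.domain, RCLike.re (@inner 𝕜 _ _ (A x) (x : V)) ≤ 0

/-- `A` is *m-dissipative* if it is dissipative and `(Id - A) D(A) = V`. -/
def MDissipative (A : V →ₗ.[𝕜] V) : Prop :=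
  Dissipative A ∧ ∀ y : V, ∃ x : A.domain, (x : V) - A x = y

/-- An operator `B` on a Hilbert space is such that both `B` and `-B` are m-dissipative
(equivalently, by Lumer–Phillips, `B` generates a unitary `C₀`-group) if and only if
`D(B)` is dense and `B* = -B`. -/
theorem mDissipative_self_and_neg_iff_skewAdjoint (B : V →ₗ.[𝕜] V) :
    (MDissipative B ∧ MDissipative (-B)) ↔
      Dense (B.domain : Set V) ∧ B.adjoint = -B := by
  constructor
  · rintro ⟨⟨hBd, hBs⟩, hnBd, hnBs⟩
    have hre : ∀ x : B.domain, re ⟪B x, (x : V)⟫ = 0 := by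
      intro x
      have h1 := hBd x
      have h2 := hnBd x
      rw [LinearPMap.neg_apply, inner_neg_left, map_neg] at h2
      linarith
    have hskew := skew_of_re_zero B hre
    have hd : Dense (B.domain : Set V) := by
      rw [Submodule.dense_iff_topologicalClosure_eq_top,
        ← B.domain.orthogonal_orthogonal_eq_closure]
      have hbot : (B.domain)ᗮ = ⊥ := by
        rw [Submodule.eq_bot_iff]
        intro y hy
        obtain ⟨x, hx⟩ := hBs y
        have h0 : ⟪(x : V), y⟫ = 0 := hy (x : V) x.2
        rw [← hx, inner_sub_right] at h0
        have h1 := congrArg re h0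
        have h2 : re ⟪(x : V), B x⟫ = 0 := by
          rw [← inner_conj_symm ((x : V)) (B x), conj_re]
          exact hre x
        rw [map_sub, h2, sub_zero] at h1
        rw [inner_self_eq_norm_sq (𝕜 := 𝕜)] at h1
        have hx0 : (x : V) = 0 := by
          refine norm_eq_zero.mp ((pow_eq_zero_iff two_ne_zero).mp ?_)
          simpa using h1
        have hxx : x = 0 := Subtype.ext hx0
        rw [← hx, hxx]
        simp
      rw [hbot, Submodule.bot_orthogonal_eq_top]
    have hfa : B.IsFormalAdjoint (-B) := by
      intro x y
      rw [LinearPMap.neg_apply]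
      exact hskew x y
    have h1 : -B ≤ B.adjoint := hfa.le_adjoint hd
    have key : ∀ v : B.adjoint.domain, ∃ x : B.domain,
        (x : V) = v ∧ B x = -(B.adjoint v) := by
      intro v
      obtain ⟨x, hx⟩ := hBs ((v : V) + B.adjoint v)
      have horth : ∀ w : V, ⟪(v : V) - (x : V), w⟫ = 0 := by
        intro w
        obtain ⟨u, hu⟩ := hnBs w
        rw [LinearPMap.neg_apply, sub_neg_eq_add] at hu
        have e1 : ⟪(v : V), B u⟫ = ⟪B.adjoint v, (u : V)⟫ :=
          ((LinearPMap.adjoint_isFormalAdjoint hd) v u).symm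
        have e2 : ⟪(x : V), B u⟫ = ⟪-(B x), (u : V)⟫ := by
          calc ⟪(x : V), B u⟫ = (starRingEnd 𝕜) ⟪B u, (x : V)⟫ := (inner_conj_symm _ _).symm
            _ = (starRingEnd 𝕜) ⟪(u : V), -(B x)⟫ := by rw [hskew u x]
            _ = ⟪-(B x), (u : V)⟫ := inner_conj_symm _ _
        calc ⟪(v : V) - (x : V), w⟫ = ⟪(v : V) - (x : V), (u : V) + B u⟫ := by rw [hu]
          _ = (⟪(v : V), (u : V)⟫ + ⟪(v : V), B u⟫)
              - (⟪(x : V), (u : V)⟫ + ⟪(x : V), B u⟫) := by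
            rw [inner_sub_left, inner_add_right, inner_add_right]
          _ = (⟪(v : V), (u : V)⟫ + ⟪B.adjoint v, (u : V)⟫)
              - (⟪(x : V), (u : V)⟫ + ⟪-(B x), (u : V)⟫) := by rw [e1, e2]
          _ = ⟪((v : V) + B.adjoint v) - ((x : V) - B x), (u : V)⟫ := by
            simp only [inner_sub_left, inner_add_left, inner_neg_left]
            ring
          _ = 0 := by rw [hx]; simp
      have hvx : (v : V) - (x : V) = 0 := inner_self_eq_zero.mp (horth _)
      have hxv : (x : V) = v := (sub_eq_zero.mp hvx).symm
      refine ⟨x, hxv, ?_⟩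
      rw [hxv] at hx
      have h4 : B x = (v : V) - ((v : V) + B.adjoint v) := by rw [← hx]; abel
      rw [h4]; abel
    have h2 : B.adjoint ≤ -B := by
      refine ⟨fun v hv => ?_, fun v y hvy => ?_⟩
      · obtain ⟨x, hx1, _⟩ := key ⟨v, hv⟩
        have hxv : (x : V) = v := hx1
        exact (show v ∈ B.domain from hxv ▸ x.2)
      · obtain ⟨x, hx1, hx2⟩ := key v
        rw [LinearPMap.neg_apply]
        have hxy : x = y := Subtype.ext (by rw [hx1, hvy])
        rw [← hxy, hx2, neg_neg]
    exact ⟨hd, le_antisymm h2 h1⟩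
  · rintro ⟨hd, ha⟩
    have hadj : ∀ v f : V, (∀ u : B.domain, ⟪f, (u : V)⟫ = ⟪v, B u⟫) →
        ∃ x : B.domain, (x : V) = v ∧ B x = -f := by
      intro v f h
      have hv : v ∈ B.adjoint.domain := LinearPMap.mem_adjoint_domain_of_exists v ⟨f, h⟩
      have hval : B.adjoint ⟨v, hv⟩ = f := LinearPMap.adjoint_apply_eq hd ⟨v, hv⟩ h
      obtain ⟨y, hy1, hy2⟩ := LinearPMap.exists_of_le (le_of_eq ha)
        (⟨v, hv⟩ : B.adjoint.domain)
      rw [LinearPMap.neg_apply, hval] at hy2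
      exact ⟨y, hy1.symm, by rw [hy2, neg_neg]⟩
    have hskew : ∀ u x : B.domain, ⟪B u, (x : V)⟫ = ⟪(u : V), -(B x)⟫ := by
      intro u x
      obtain ⟨y, hy1, hy2⟩ := LinearPMap.exists_of_le (le_of_eq ha.symm) x
      have hfa := (LinearPMap.adjoint_isFormalAdjoint hd) y u
      rw [← hy2, LinearPMap.neg_apply, ← hy1] at hfa
      calc ⟪B u, (x : V)⟫ = (starRingEnd 𝕜) ⟪(x : V), B u⟫ := (inner_conj_symm _ _).symm
        _ = (starRingEnd 𝕜) ⟪-(B x), (u : V)⟫ := by rw [← hfa]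
        _ = ⟪(u : V), -(B x)⟫ := inner_conj_symm _ _
    have hre := re_zero_of_skew B hskew
    refine ⟨⟨fun x => (hre x).le, surj_of_skew B hd hskew hadj⟩, ?_, ?_⟩
    · intro x
      have h2 : re ⟪(-B) x, ((x : V))⟫ = 0 := by
        rw [LinearPMap.neg_apply, inner_neg_left, map_neg, hre x, neg_zero]
      exact h2.le
    · refine surj_of_skew (-B) hd ?_ ?_
      · intro u x
        rw [LinearPMap.neg_apply, LinearPMap.neg_apply, inner_neg_left, neg_neg,
          hskew u x, inner_neg_right, neg_neg]
      · intro v f h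
        have hpre : ∀ u : B.domain, ⟪-f, (u : V)⟫ = ⟪v, B u⟫ := by
          intro u
          have h0 := h u
          rw [LinearPMap.neg_apply, inner_neg_right] at h0
          rw [inner_neg_left, h0, neg_neg]
        obtain ⟨x, hx1, hx2⟩ := hadj v (-f) hpre
        exact ⟨x, hx1, by rw [LinearPMap.neg_apply, hx2, neg_neg]⟩

end Aux
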